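/- Let G be a finite 6-regular simple graph on n vertices having an independent exact r-cover for every r ∈ {1,2,3,4,5,6}. Then 9240 divides n. -/
import Mathlib

open SimpleGraph

/-- `S` is an independent exact `r`-cover of `G`: `S` is independent and every vertex
outside `S` has exactly `r` neighbours in `S`. -/
def IsIndepExactCover {V : Type*} (G : SimpleGraph V) (r : ℕ) (S : Set V) : Prop :=
  (∀ x ∈ S, ∀ y ∈ S, ¬ G.Adj x y) ∧
  ∀ v ∉ S, (S ∩ G.neighborSet v).ncard = r

private lemma swap_count {V : Type*} [Fintype V] [DecidableEq V] (G : SimpleGraph V)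
    [DecidableRel G.Adj] (A B : Finset V) :
    ∑ a ∈ A, (B.filter (G.Adj a)).card = ∑ b ∈ B, (A.filter (fun a => G.Adj a b)).card := by
  simp_rw [Finset.card_filter]
  exact Finset.sum_comm

private lemma cover_count {V : Type*} [Fintype V] (G : SimpleGraph V)
    (hreg : ∀ v : V, (G.neighborSet v).ncard = 6) {r : ℕ} {S : Set V}
    (h : IsIndepExactCover G r S) : (6 + r) * S.ncard = r * Fintype.card V := by
  classical
  obtain ⟨hind, hcov⟩ := h
  have key := swap_count G S.toFinset S.toFinsetᶜ
  have hL : ∀ a ∈ S.toFinset, ((S.toFinsetᶜ).filter (G.Adj a)).card = 6 := by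
    intro a ha
    rw [Set.mem_toFinset] at ha
    have : (S.toFinsetᶜ).filter (G.Adj a) = (G.neighborSet a).toFinset := by
      ext x
      simp only [Finset.mem_filter, Finset.mem_compl, Set.mem_toFinset, mem_neighborSet]
      exact ⟨fun hx => hx.2, fun hx => ⟨fun hxS => hind a ha x hxS hx, hx⟩⟩
    rw [this, ← Set.ncard_eq_toFinset_card', hreg]
  have hR : ∀ b ∈ S.toFinsetᶜ, (S.toFinset.filter (fun a => G.Adj a b)).card = r := by
    intro b hb
    rw [Finset.mem_compl, Set.mem_toFinset] at hb
    have : S.toFinset.filter (fun a => G.Adj a b) = (S ∩ G.neighborSet b).toFinset := by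
      ext x
      simp only [Finset.mem_filter, Set.mem_toFinset, Set.mem_inter_iff, mem_neighborSet]
      rw [G.adj_comm]
    rw [this, ← Set.ncard_eq_toFinset_card', hcov b hb]
  rw [Finset.sum_congr rfl hL, Finset.sum_congr rfl hR] at key
  rw [Finset.sum_const, Finset.sum_const, smul_eq_mul, smul_eq_mul,
    Finset.card_compl] at key
  have hle : S.toFinset.card ≤ Fintype.card V := Finset.card_le_univ _
  rw [Set.ncard_eq_toFinset_card']
  have heq : r * Fintype.card V = r * (Fintype.card V - S.toFinset.card) + r * S.toFinset.card := by
    rw [← Nat.mul_add, Nat.sub_add_cancel hle]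
  rw [heq, Nat.mul_comm r (Fintype.card V - S.toFinset.card), ← key]
  ring

private lemma cross_count {V : Type*} [Fintype V] (G : SimpleGraph V)
    {r₁ r₂ : ℕ} {S₁ S₂ : Set V}
    (h1 : IsIndepExactCover G r₁ S₁) (h2 : IsIndepExactCover G r₂ S₂) :
    r₂ * (S₁ \ S₂).ncard = r₁ * (S₂ \ S₁).ncard := by
  classical
  obtain ⟨hind1, hcov1⟩ := h1
  obtain ⟨hind2, hcov2⟩ := h2
  have key := swap_count G (S₁ \ S₂).toFinset (S₂ \ S₁).toFinset
  have hL : ∀ a ∈ (S₁ \ S₂).toFinset,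
      (((S₂ \ S₁).toFinset).filter (G.Adj a)).card = r₂ := by
    intro a ha
    rw [Set.mem_toFinset, Set.mem_diff] at ha
    have : ((S₂ \ S₁).toFinset).filter (G.Adj a) = (S₂ ∩ G.neighborSet a).toFinset := by
      ext x
      simp only [Finset.mem_filter, Set.mem_toFinset, Set.mem_diff, Set.mem_inter_iff,
        mem_neighborSet]
      exact ⟨fun hx => ⟨hx.1.1, hx.2⟩,
        fun hx => ⟨⟨hx.1, fun hxS => hind1 a ha.1 x hxS hx.2⟩, hx.2⟩⟩
    rw [this, ← Set.ncard_eq_toFinset_card', hcov2 a ha.2]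
  have hR : ∀ b ∈ (S₂ \ S₁).toFinset,
      (((S₁ \ S₂).toFinset).filter (fun a => G.Adj a b)).card = r₁ := by
    intro b hb
    rw [Set.mem_toFinset, Set.mem_diff] at hb
    have : ((S₁ \ S₂).toFinset).filter (fun a => G.Adj a b)
        = (S₁ ∩ G.neighborSet b).toFinset := by
      ext x
      simp only [Finset.mem_filter, Set.mem_toFinset, Set.mem_diff, Set.mem_inter_iff,
        mem_neighborSet]
      constructor
      · intro hx
        exact ⟨hx.1.1, hx.2.symm⟩
      · intro hx
        exact ⟨⟨hx.1, fun hxS => hind2 b hb.1 x hxS hx.2⟩, hx.2.symm⟩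
    rw [this, ← Set.ncard_eq_toFinset_card', hcov1 b hb.2]
  rw [Finset.sum_congr rfl hL, Finset.sum_congr rfl hR, Finset.sum_const,
    Finset.sum_const, smul_eq_mul, smul_eq_mul] at key
  rw [Set.ncard_eq_toFinset_card', Set.ncard_eq_toFinset_card',
    Nat.mul_comm r₂, key, Nat.mul_comm]

private lemma ncard_split {V : Type*} [Fintype V] (S T : Set V) :
    (S \ T).ncard + (S ∩ T).ncard = S.ncard := by
  classical
  rw [Set.ncard_eq_toFinset_card', Set.ncard_eq_toFinset_card', Set.ncard_eq_toFinset_card',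
    Set.toFinset_diff, Set.toFinset_inter]
  exact Finset.card_sdiff_add_card_inter _ _

set_option maxHeartbeats 1000000 in
theorem stmt_9 {V : Type*} [Fintype V] (G : SimpleGraph V) (n : ℕ)
    (hn : Fintype.card V = n)
    (hreg : ∀ v : V, (G.neighborSet v).ncard = 6)
    (hcov : ∀ r, 1 ≤ r → r ≤ 6 → ∃ S : Set V, IsIndepExactCover G r S) :
    9240 ∣ n := by
  obtain ⟨S1, hS1⟩ := hcov 1 (by norm_num) (by norm_num)
  obtain ⟨S2, hS2⟩ := hcov 2 (by norm_num) (by norm_num)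
  obtain ⟨S3, hS3⟩ := hcov 3 (by norm_num) (by norm_num)
  obtain ⟨S4, hS4⟩ := hcov 4 (by norm_num) (by norm_num)
  obtain ⟨S5, hS5⟩ := hcov 5 (by norm_num) (by norm_num)
  obtain ⟨S6, hS6⟩ := hcov 6 (by norm_num) (by norm_num)
  have h1 := cover_count G hreg hS1
  have h2 := cover_count G hreg hS2
  have h3 := cover_count G hreg hS3
  have h4 := cover_count G hreg hS4
  have h5 := cover_count G hreg hS5
  have h6 := cover_count G hreg hS6
  rw [hn] at h1 h2 h3 h4 h5 h6
  have hcross := cross_count G hS2 hS6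
  have hsplit2 := ncard_split S2 S6
  have hsplit6 := ncard_split S6 S2
  have hswap : S6 ∩ S2 = S2 ∩ S6 := Set.inter_comm _ _
  rw [hswap] at hsplit6
  set a1 := S1.ncard with ha1
  set a2 := S2.ncard with ha2
  set a3 := S3.ncard with ha3
  set a4 := S4.ncard with ha4
  set a5 := S5.ncard with ha5
  set a6 := S6.ncard with ha6
  set d26 := (S2 \ S6).ncard with hd26
  set d62 := (S6 \ S2).ncard with hd62
  set i26 := (S2 ∩ S6).ncard with hi26
  clear_value a1 a2 a3 a4 a5 a6 d26 d62 i26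
  have d3 : (3:ℕ) ∣ n := by clear * - h3; omega
  have d5 : (5:ℕ) ∣ n := by clear * - h4; omega
  have d7 : (7:ℕ) ∣ n := by clear * - h1; omega
  have d8 : (8:ℕ) ∣ n := by clear * - h2 h6 hcross hsplit2 hsplit6; omega
  have d11 : (11:ℕ) ∣ n := by clear * - h5; omega
  have d15 : (15:ℕ) ∣ n := Nat.Coprime.mul_dvd_of_dvd_of_dvd (by norm_num) d3 d5
  have d105 : (105:ℕ) ∣ n := Nat.Coprime.mul_dvd_of_dvd_of_dvd (by norm_num) d15 d7
  have d840 : (840:ℕ) ∣ n := Nat.Coprime.mul_dvd_of_dvd_of_dvd (by norm_num) d105 d8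
  exact Nat.Coprime.mul_dvd_of_dvd_of_dvd (by norm_num) d840 d11
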